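/- Let H be a closed nilpotent subgroup of the isometry group Isom(ℝ^l) of Euclidean space ℝ^l whose action on ℝ^l is transitive. Then every element of H is a translation, and H equals the full group of translations of ℝ^l (so H is isomorphic to ℝ^l as a topological group). -/

import Mathlib

open Submodule Module

/-- Nontrivial nilpotent group has an element of the center other than 1. -/
lemma exists_center_ne_one (G : Type*) [Group G] [hG : Group.IsNilpotent G] [Nontrivial G] :
    ∃ z : G, z ∈ Subgroup.center G ∧ z ≠ 1 := by
  by_contra hc
  push_neg at hc
  have hcen : Subgroup.center G = ⊥ := by
    rw [eq_bot_iff]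
    intro z hz
    simp only [Subgroup.mem_bot]
    by_contra h1
    exact h1 (hc z hz)
  have hucs : ∀ n, Subgroup.upperCentralSeries G n = ⊥ := by
    intro n
    induction n with
    | zero => exact Subgroup.upperCentralSeries_zero G
    | succ n ih =>
      rw [eq_bot_iff]
      intro x hx
      rw [mem_upperCentralSeries_succ_iff] at hx
      have : x ∈ Subgroup.center G := by
        rw [Subgroup.mem_center_iff]
        intro y
        have := hx y
        rw [ih, Subgroup.mem_bot] at this
        have h2 : x * y * x⁻¹ * y⁻¹ * (y * x) = y * x := by rw [← commutatorElement_def, this, one_mul]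
        calc y * x = x * y * x⁻¹ * y⁻¹ * (y * x) := h2.symm
        _ = x * y := by group
      rw [hcen, Subgroup.mem_bot] at this
      simp [this]
  obtain ⟨n, hn⟩ := hG
  rw [hucs n, eq_comm, eq_bot_iff] at hn
  obtain ⟨a, b, hab⟩ := exists_pair_ne G
  have ha : a = 1 := by simpa using hn (Subgroup.mem_top a)
  have hb : b = 1 := by simpa using hn (Subgroup.mem_top b)
  exact hab (ha.trans hb.symm)

section Key

variable {E : Type} [NormedAddCommGroup E] [InnerProductSpace ℝ E]

/-- An isometry with constant displacement on a real inner product space is a translation. -/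
lemma translation_of_const_disp (f : E ≃ᵢ E)
    (h : ∀ v, dist v (f v) = dist (0 : E) (f 0)) : ∀ v, f v = v + f 0 := by
  intro v
  have happ : ∀ x, f x = f.toRealLinearIsometryEquiv x + f 0 := by
    intro x
    rw [IsometryEquiv.toRealLinearIsometryEquiv_apply]
    abel
  set A := f.toRealLinearIsometryEquiv with hA
  set c := f 0 with hc
  have key : ∀ s : ℝ, ‖s • (A v - v) + c‖ ^ 2 = ‖c‖ ^ 2 := by
    intro s
    have := h (s • v)
    rw [happ (s • v)] at this
    rw [dist_eq_norm, dist_eq_norm] at this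
    have h2 : s • v - (A (s • v) + c) = -(s • (A v - v) + c) := by
      rw [map_smul]; module
    rw [h2, norm_neg] at this
    have h3 : ‖(0:E) - c‖ = ‖c‖ := by simp
    rw [h3] at this
    rw [this]
  have expand : ∀ s : ℝ, s ^ 2 * ‖A v - v‖ ^ 2 + 2 * s * inner ℝ (A v - v) c = 0 := by
    intro s
    have := key s
    rw [norm_add_sq_real, norm_smul, inner_smul_left] at this
    simp only [Real.norm_eq_abs, RCLike.star_def, starRingEnd_apply, star_trivial] at this
    nlinarith [sq_abs s, sq_nonneg s]
  have e1 := expand 1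
  have e2 := expand 2
  have : ‖A v - v‖ ^ 2 = 0 := by nlinarith
  have : A v - v = 0 := by
    have := pow_eq_zero_iff (n := 2) (by norm_num) |>.mp this
    exact norm_eq_zero.mp this
  have hAv : A v = v := by linear_combination (norm := abel) this
  rw [happ v, hAv]

/-- Key lemma: a nilpotent transitive isometry group of a finite-dimensional real
inner product space consists of translations. Induction on the dimension. -/
theorem key : ∀ (n : ℕ) (E : Type) [NormedAddCommGroup E] [InnerProductSpace ℝ E]
    [FiniteDimensional ℝ E], finrank ℝ E = n →
    ∀ (H : Subgroup (E ≃ᵢ E)), Group.IsNilpotent H →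
    (∀ v w : E, ∃ h ∈ H, h v = w) →
    ∀ f ∈ H, ∀ v, f v = v + f 0 := by
  intro n
  induction n using Nat.strong_induction_on with
  | _ n IH =>
    intro E _ _ _ hn H hnilp htrans f hf
    by_cases hH : ∀ g ∈ H, g = 1
    · have := hH f hf
      subst this
      intro v; simp
    -- H is nontrivial
    push_neg at hH
    obtain ⟨g, hgH, hg1⟩ := hH
    have : Nontrivial H := ⟨⟨g, hgH⟩, 1, by simpa [Subtype.ext_iff] using hg1⟩
    have : Group.IsNilpotent H := hnilp
    obtain ⟨z, hzc, hz1⟩ := exists_center_ne_one H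
    set zE : E ≃ᵢ E := (z : E ≃ᵢ E) with hzE
    have hzH : zE ∈ H := z.2
    have hzcomm : ∀ h : E ≃ᵢ E, h ∈ H → ∀ x, h (zE x) = zE (h x) := by
      intro h hh x
      have hc1 : (⟨h, hh⟩ * z : H) = z * ⟨h, hh⟩ := Subgroup.mem_center_iff.mp hzc ⟨h, hh⟩
      have hc2 : h * zE = zE * h := by
        have := congrArg (fun a : H => (a : E ≃ᵢ E)) hc1
        simpa using this
      calc h (zE x) = (h * zE) x := rfl
        _ = (zE * h) x := by rw [hc2]
        _ = zE (h x) := rfl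
    -- z is a translation
    have hconst : ∀ v, dist v (zE v) = dist (0 : E) (zE 0) := by
      intro v
      obtain ⟨h, hh, hh0⟩ := htrans 0 v
      rw [← hh0, ← hzcomm h hh 0]
      exact h.dist_eq 0 (zE 0)
    have hztrans : ∀ v, zE v = v + zE 0 := translation_of_const_disp zE hconst
    set t : E := zE 0 with ht
    have ht0 : t ≠ 0 := by
      intro h0
      apply hz1
      apply Subtype.ext
      apply IsometryEquiv.ext
      intro x
      have hx := hztrans x
      rw [h0, add_zero] at hx
      simpa using hx
    -- linear parts fix t
    have hfix : ∀ h : E ≃ᵢ E, h ∈ H → h.toRealLinearIsometryEquiv t = t := by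
      intro h hh
      have := hzcomm h hh 0
      rw [hztrans (h 0), hztrans 0, zero_add] at this
      -- this : h t = h 0 + t
      rw [IsometryEquiv.toRealLinearIsometryEquiv_apply, this]
      abel
    -- setup the orthogonal complement
    set K : Submodule ℝ E := (ℝ ∙ t)ᗮ with hK
    have htKbot : t ∈ Kᗮ := by
      rw [hK]
      exact (ℝ ∙ t).le_orthogonal_orthogonal (mem_span_singleton_self t)
    have hPt : orthogonalProjection K t = 0 :=
      orthogonalProjection_mem_subspace_orthogonalComplement_eq_zero htKbot
    have hsub : ∀ v : E, ∃ s : ℝ, v - orthogonalProjection K v = s • t := by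
      intro v
      have h1 : v - orthogonalProjection K v ∈ Kᗮ := Submodule.sub_starProjection_mem_orthogonal (K := K) v
      have h2 : Kᗮ = ℝ ∙ t := by rw [hK, Submodule.orthogonal_orthogonal]
      obtain ⟨s, hs⟩ := mem_span_singleton.mp (h2 ▸ h1)
      exact ⟨s, hs.symm⟩
    -- the key projection identity
    have star : ∀ h : E ≃ᵢ E, h ∈ H → ∀ x : E,
        orthogonalProjection K (h x) =
          orthogonalProjection K (h (orthogonalProjection K x)) := by
      intro h hh x
      obtain ⟨s, hs⟩ := hsub x
      have happ : ∀ y, h y = h.toRealLinearIsometryEquiv y + h 0 := by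
        intro y; rw [IsometryEquiv.toRealLinearIsometryEquiv_apply]; abel
      have hx : h x = h (orthogonalProjection K x) + s • t := by
        have hxeq : x = (orthogonalProjection K x : E) + s • t := by rw [← hs]; abel
        rw [happ x, happ ((orthogonalProjection K x : E))]
        conv_lhs => rw [hxeq]
        rw [map_add, map_smul, hfix h hh]
        abel
      rw [hx, map_add, map_smul, hPt, smul_zero, add_zero]
    -- L h maps K to K
    have hLK : ∀ h : E ≃ᵢ E, h ∈ H → ∀ k : E, k ∈ K →
        h.toRealLinearIsometryEquiv k ∈ K := by
      intro h hh k hk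
      rw [hK] at hk ⊢
      rw [Submodule.mem_orthogonal] at hk ⊢
      intro u hu
      obtain ⟨s, rfl⟩ := mem_span_singleton.mp hu
      have h1 : (inner ℝ (s • t) (h.toRealLinearIsometryEquiv k) : ℝ) =
          inner ℝ (h.toRealLinearIsometryEquiv (s • t)) (h.toRealLinearIsometryEquiv k) := by
        rw [map_smul, hfix h hh]
      rw [h1, h.toRealLinearIsometryEquiv.inner_map_map]
      exact hk _ hu
    -- the coercion formula for the projected action
    have hcoe : ∀ h : E ≃ᵢ E, h ∈ H → ∀ k : K,
        ((orthogonalProjection K (h k) : K) : E) =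
          h.toRealLinearIsometryEquiv k + (orthogonalProjection K (h 0) : E) := by
      intro h hh k
      have happ : h (k : E) = h.toRealLinearIsometryEquiv (k : E) + h 0 := by
        rw [IsometryEquiv.toRealLinearIsometryEquiv_apply]; abel
      rw [happ, map_add]
      have hmem : h.toRealLinearIsometryEquiv (k : E) ∈ K := hLK h hh k k.2
      have : orthogonalProjection K (h.toRealLinearIsometryEquiv (k : E)) =
          ⟨h.toRealLinearIsometryEquiv (k : E), hmem⟩ :=
        orthogonalProjection_mem_subspace_eq_self ⟨_, hmem⟩
      rw [this]
      rfl
    have hPk : ∀ k : K, orthogonalProjection K (k : E) = k :=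
      fun k => orthogonalProjection_mem_subspace_eq_self k
    -- define the induced isometry on K
    have hinv : ∀ h : E ≃ᵢ E, h ∈ H → h⁻¹ ∈ H := fun h hh => H.inv_mem hh
    let ψ : ∀ h : E ≃ᵢ E, h ∈ H → (K ≃ᵢ K) := fun h hh =>
      { toFun := fun k => orthogonalProjection K (h k)
        invFun := fun k => orthogonalProjection K (h⁻¹ k)
        left_inv := by
          intro k
          have h1 := (star h⁻¹ (hinv h hh) (h k)).symm
          simp only at h1 ⊢
          rw [h1]
          have : (h⁻¹ : E ≃ᵢ E) (h (k : E)) = k := h.symm_apply_apply k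
          rw [this, hPk]
        right_inv := by
          intro k
          have h1 := (star h hh ((h⁻¹ : E ≃ᵢ E) k)).symm
          simp only at h1 ⊢
          rw [h1]
          have : h ((h⁻¹ : E ≃ᵢ E) (k : E)) = k := h.apply_symm_apply k
          rw [this, hPk]
        isometry_toFun := by
          intro k k'
          simp only
          rw [edist_dist, edist_dist]
          congr 1
          rw [Subtype.dist_eq, Subtype.dist_eq]
          rw [hcoe h hh k, hcoe h hh k']
          rw [dist_eq_norm, dist_eq_norm]
          have : h.toRealLinearIsometryEquiv (k : E) +
              (orthogonalProjection K (h 0) : E) -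
              (h.toRealLinearIsometryEquiv (k' : E) +
              (orthogonalProjection K (h 0) : E)) =
              h.toRealLinearIsometryEquiv ((k : E) - (k' : E)) := by
            rw [map_sub]; abel
          rw [this, h.toRealLinearIsometryEquiv.norm_map] }
    have hψ_apply : ∀ (h : E ≃ᵢ E) (hh : h ∈ H) (k : K),
        ψ h hh k = orthogonalProjection K (h k) := fun _ _ _ => rfl
    -- build the homomorphism
    let φ : H →* (K ≃ᵢ K) :=
      { toFun := fun h => ψ h h.2
        map_one' := by
          apply IsometryEquiv.ext
          intro k
          rw [hψ_apply _ (1 : H).2 k]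
          simp only [Subgroup.coe_one, IsometryEquiv.coe_one, id_eq]
          exact hPk k
        map_mul' := by
          intro a b
          apply IsometryEquiv.ext
          intro k
          rw [IsometryEquiv.mul_apply, hψ_apply _ (a*b).2 k, hψ_apply _ b.2 k,
            hψ_apply _ a.2 _]
          have hab : ((a * b : H) : E ≃ᵢ E) (k : E) = (a : E ≃ᵢ E) ((b : E ≃ᵢ E) (k : E)) := rfl
          rw [hab]
          exact star (a : E ≃ᵢ E) a.2 ((b : E ≃ᵢ E) (k : E)) }
    set H' : Subgroup (K ≃ᵢ K) := φ.range with hH'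
    have hnilp' : Group.IsNilpotent H' := by
      exact @nilpotent_of_surjective _ _ _ _ hnilp φ.rangeRestrict
        φ.rangeRestrict_surjective
    have htrans' : ∀ v w : K, ∃ g ∈ H', g v = w := by
      intro v w
      obtain ⟨h, hh, hvw⟩ := htrans (v : E) (w : E)
      refine ⟨φ ⟨h, hh⟩, ⟨⟨h, hh⟩, rfl⟩, ?_⟩
      show ψ h hh v = w
      rw [hψ_apply h hh v, hvw, hPk]
    -- dimension drops
    have hdim : finrank ℝ K < n := by
      have h1 : finrank ℝ (ℝ ∙ t) = 1 := finrank_span_singleton ht0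
      have h2 := Submodule.finrank_add_finrank_orthogonal (K := (ℝ ∙ t))
      rw [h1, hn] at h2
      rw [hK]
      omega
    have hIH := IH (finrank ℝ K) hdim K rfl H' hnilp' htrans'
    -- conclusion: linear part of every element of H is the identity
    have hlin : ∀ h : E ≃ᵢ E, h ∈ H → ∀ v : E, h.toRealLinearIsometryEquiv v = v := by
      intro h hh v
      have hg : φ ⟨h, hh⟩ ∈ H' := ⟨⟨h, hh⟩, rfl⟩
      have hK0 : ∀ k : K, ψ h hh k = k + ψ h hh 0 := hIH _ hg
      have hone : ∀ k : K, h.toRealLinearIsometryEquiv (k : E) = k := by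
        intro k
        have := hK0 k
        rw [hψ_apply h hh k, hψ_apply h hh 0] at this
        have h0 : ((0 : K) : E) = (0 : E) := rfl
        have := congrArg (fun x : K => (x : E)) this
        simp only [Submodule.coe_add] at this
        rw [hcoe h hh k] at this
        have hco : ((orthogonalProjection K (h ((0:K) : E)) : K) : E) =
            (orthogonalProjection K (h 0) : E) := by rw [h0]
        rw [hco] at this
        have := add_right_cancel this
        exact this
      obtain ⟨s, hs⟩ := hsub v
      have : v = ((orthogonalProjection K v : K) : E) + s • t := by rw [← hs]; abel
      rw [this, map_add, map_smul, hfix h hh, hone]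
    intro v
    have h1 := hlin f hf v
    have h2 : f.toRealLinearIsometryEquiv v = f v - f 0 :=
      IsometryEquiv.toRealLinearIsometryEquiv_apply f v
    rw [h1] at h2
    exact sub_eq_iff_eq_add.mp h2.symm

end Key

/-- A closed nilpotent subgroup of `Isom(ℝˡ)` (closedness taken in the compact-open topology,
via the natural embedding into `C(ℝˡ, ℝˡ)`) acting transitively on `ℝˡ` consists exactly of
all the translations of `ℝˡ`. -/
theorem stmt_4 (l : ℕ)
    (H : Subgroup (EuclideanSpace ℝ (Fin l) ≃ᵢ EuclideanSpace ℝ (Fin l)))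
    (hclosed : IsClosed ((fun h : EuclideanSpace ℝ (Fin l) ≃ᵢ EuclideanSpace ℝ (Fin l) =>
        (⟨h, h.continuous⟩ : C(EuclideanSpace ℝ (Fin l), EuclideanSpace ℝ (Fin l)))) ''
        (H : Set (EuclideanSpace ℝ (Fin l) ≃ᵢ EuclideanSpace ℝ (Fin l)))))
    (hnilp : Group.IsNilpotent H)
    (htrans : ∀ v w : EuclideanSpace ℝ (Fin l), ∃ h ∈ H, h v = w) :
    ∀ f : EuclideanSpace ℝ (Fin l) ≃ᵢ EuclideanSpace ℝ (Fin l),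
      f ∈ H ↔ ∃ t : EuclideanSpace ℝ (Fin l), ∀ v, f v = v + t := by
  have hkey := key (Module.finrank ℝ (EuclideanSpace ℝ (Fin l)))
    (EuclideanSpace ℝ (Fin l)) rfl H hnilp htrans
  intro f
  constructor
  · intro hf
    exact ⟨f 0, hkey f hf⟩
  · rintro ⟨t, hft⟩
    obtain ⟨h, hh, hh0⟩ := htrans 0 t
    have : f = h := by
      apply IsometryEquiv.ext
      intro v
      rw [hft v, hkey h hh v, hh0]
    rw [this]
    exact hh
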